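/- A ring R is strongly nil-clean if and only if R is both a UU ring and a GNC ring. -/

import Mathlib

/-- An element is nil-clean if it is the sum of an idempotent and a nilpotent. -/
def IsNilClean {R : Type*} [Ring R] (a : R) : Prop :=
  ∃ e q : R, IsIdempotentElem e ∧ IsNilpotent q ∧ a = e + q

/-- A ring is GNC (generalized nil-clean) if every non-unit is nil-clean. -/
def IsGNC (R : Type*) [Ring R] : Prop :=
  ∀ a : R, ¬ IsUnit a → IsNilClean a

namespace SNCProof

variable {R : Type*} [Ring R]

/-- The UU property: every unit is unipotent. -/
def UU (R : Type*) [Ring R] : Prop := ∀ u : R, IsUnit u → ∃ q : R, IsNilpotent q ∧ u = 1 + q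

/-- quasi-regularity (Jacobson-radical membership) predicate -/
def QR (R : Type*) [Ring R] (x : R) : Prop := ∀ r : R, IsUnit (1 + r * x)



/-- quasi-regularity (Jacobson-radical membership) predicate -/

lemma isUnit_one_add_swap {a b : R} (h : IsUnit (1 + a * b)) : IsUnit (1 + b * a) := by
  obtain ⟨u, hu⟩ := h
  set x := ((u⁻¹ : Rˣ) : R) with hxdef
  have h1 : (1 + a * b) * x = 1 := by rw [← hu, hxdef]; exact u.mul_inv
  have h2 : x * (1 + a * b) = 1 := by rw [← hu, hxdef]; exact u.inv_mul
  have habx : a * b * x = 1 - x := by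
    rw [add_mul, one_mul] at h1
    rw [← h1]; abel
  have hxab : x * (a * b) = 1 - x := by
    rw [mul_add, mul_one] at h2
    rw [← h2]; abel
  refine isUnit_iff_exists.mpr ⟨1 - b * x * a, ?_, ?_⟩
  · have e1 : (1 + b * a) * (1 - b * x * a) = 1 + b * a - b * x * a - b * (a * b * x) * a := by
      noncomm_ring
    rw [e1, habx]; noncomm_ring
  · have e2 : (1 - b * x * a) * (1 + b * a) = 1 + b * a - b * x * a - b * (x * (a * b)) * a := by
      noncomm_ring
    rw [e2, hxab]; noncomm_ring

lemma QR.zero : QR R 0 := fun r => by simp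

lemma QR.add {x y : R} (hx : QR R x) (hy : QR R y) : QR R (x + y) := by
  intro r
  obtain ⟨u, hu⟩ := hx r
  have h2 : IsUnit (1 + (((u⁻¹ : Rˣ) : R) * r) * y) := hy _
  have key : (1 + r * x) * (1 + (((u⁻¹ : Rˣ) : R) * r) * y) = 1 + r * (x + y) := by
    rw [← hu]
    have : ((u : R)) * (((u⁻¹ : Rˣ) : R) * r * y) = r * y := by
      rw [← mul_assoc, ← mul_assoc, u.mul_inv, one_mul]
    rw [mul_add, mul_one, this, hu]
    rw [mul_add]; abel
  rw [← key]
  have hu' : IsUnit (1 + r * x) := ⟨u, hu⟩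
  exact hu'.mul h2

lemma QR.neg {x : R} (hx : QR R x) : QR R (-x) := by
  intro r
  have := hx (-r)
  simpa [neg_mul, mul_neg] using this

lemma QR.mul_left {x : R} (s : R) (hx : QR R x) : QR R (s * x) := by
  intro r
  have := hx (r * s)
  simpa [mul_assoc] using this

lemma QR.mul_right {x : R} (s : R) (hx : QR R x) : QR R (x * s) := by
  intro r
  have h1 : IsUnit (1 + (s * r) * x) := hx (s * r)
  have h2 : IsUnit (1 + (s * (r * x))) := by
    rw [← mul_assoc]; exact h1
  have := isUnit_one_add_swap (a := s) (b := r * x) h2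
  simpa [mul_assoc] using this


open Polynomial

private noncomputable def NP : ℕ → Polynomial ℤ
  | 0 => X
  | (j+1) => 3*(NP j)^2 - 2*(NP j)^3

private lemma NP_dvd1 (j : ℕ) : (X - X^2 : Polynomial ℤ)^(2^j) ∣ (NP j - (NP j)^2) := by
  induction j with
  | zero => simpa [NP] using dvd_refl _
  | succ j ih =>
    have key : NP (j+1) - (NP (j+1))^2
        = (NP j - (NP j)^2)^2 * (3 + 4*(NP j) - 4*(NP j)^2) := by
      show (3*(NP j)^2 - 2*(NP j)^3) - (3*(NP j)^2 - 2*(NP j)^3)^2 = _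
      ring
    rw [key]
    have h2 : ((X - X^2 : Polynomial ℤ)^(2^j))^2 ∣ (NP j - (NP j)^2)^2 :=
      pow_dvd_pow_of_dvd ih 2
    rw [← pow_mul] at h2
    have h3 : (2:ℕ)^j * 2 = 2^(j+1) := by rw [pow_succ]
    rw [h3] at h2
    exact dvd_mul_of_dvd_left h2 _
  
private lemma NP_dvd2 (j : ℕ) : (X - X^2 : Polynomial ℤ) ∣ (X - NP j) := by
  induction j with
  | zero => simp [NP]
  | succ j ih =>
    have key : (X - NP (j+1) : Polynomial ℤ) = (X - NP j) + (NP j - (NP j)^2) * (1 - 2*(NP j)) := by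
      show (X - (3*(NP j)^2 - 2*(NP j)^3) : Polynomial ℤ) = _
      ring
    rw [key]
    exact dvd_add ih (dvd_mul_of_dvd_left (dvd_trans (dvd_pow_self _ (Nat.pos_of_ne_zero (by positivity)).ne') (NP_dvd1 j)) _)

variable {R : Type*} [Ring R]

lemma newton (a : R) (h : IsNilpotent (a - a^2)) :
    ∃ e q : R, IsIdempotentElem e ∧ IsNilpotent q ∧ Commute e q ∧ a = e + q := by
  obtain ⟨m₀, hm₀⟩ := h
  have hm : (a - a^2)^(m₀+1) = 0 := by rw [pow_succ, hm₀, zero_mul]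
  set m := m₀ + 1 with hmdef
  have hj : m ≤ 2^m := (Nat.lt_two_pow_self (n := m)).le
  have hcomm : ∀ P Q : Polynomial ℤ, Commute (aeval a P) (aeval a Q) := by
    intro P Q
    show _ * _ = _ * _
    rw [← map_mul, ← map_mul, mul_comm]
  have hXX : aeval a (X - X^2 : Polynomial ℤ) = a - a^2 := by simp
  have hXXpow : (a - a^2)^(2^m) = 0 := by
    rw [← Nat.add_sub_cancel' hj, pow_add, hm, zero_mul]
  set e := aeval a (NP m) with hedef
  refine ⟨e, a - e, ?_, ?_, ?_, by abel⟩
  · obtain ⟨g, hg⟩ := NP_dvd1 m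
    have : e - e^2 = aeval a ((X - X^2 : Polynomial ℤ)^(2^m)) * aeval a g := by
      rw [hedef, ← map_pow, ← map_sub, hg, map_mul]
    rw [map_pow, hXX, hXXpow, zero_mul, sub_eq_zero] at this
    show e * e = e
    rw [← pow_two, ← this]
  · obtain ⟨g, hg⟩ := NP_dvd2 m
    have : a - e = aeval a ((X - X^2 : Polynomial ℤ) * g) := by
      rw [← hg, map_sub, aeval_X, hedef]
    rw [map_mul, hXX] at this
    rw [this]
    exact Commute.isNilpotent_mul_right (hXX ▸ hcomm _ g) ⟨m, hm⟩
  · have h1 : Commute e a := by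
      have := hcomm (NP m) X
      simpa using this
    have := h1.sub_right (Commute.refl e)
    simpa using this
    

/-- The UU property. -/

lemma two_nilpotent (hUU : UU R) : IsNilpotent (2 : R) := by
  obtain ⟨q, hq, h⟩ := hUU (-1) isUnit_one.neg
  have h2 : q = -2 := by
    have h' : (-1 : R) - 1 = q := by rw [h]; abel
    rw [← h']; norm_num
  rw [h2] at hq
  simpa using hq.neg

lemma commute_two (x : R) : Commute (2 : R) x := by
  have : (2 : R) = ((2 : ℕ) : R) := by norm_num
  rw [this]
  exact (Nat.commute_cast x 2).symm

lemma nilpotent_two_mul (hUU : UU R) (x : R) : IsNilpotent (2 * x) := by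
  obtain ⟨k, hk⟩ := two_nilpotent hUU
  exact ⟨k, by rw [(commute_two x).mul_pow, hk, zero_mul]⟩

/-- every element is clean -/
lemma clean (hUU : UU R) (hGNC : IsGNC R) (a : R) :
    ∃ f u : R, IsIdempotentElem f ∧ IsUnit u ∧ a = f + u := by
  by_cases ha : IsUnit a
  · exact ⟨0, a, IsIdempotentElem.zero, ha, by rw [zero_add]⟩
  obtain ⟨h, m, hh, hm, rfl⟩ := hGNC a ha
  refine ⟨1 - h, 2*h - 1 + m, hh.one_sub, ?_, by noncomm_ring⟩
  obtain ⟨v, hv⟩ := hm.isUnit_one_sub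
  have hn : IsNilpotent (((v⁻¹ : Rˣ) : R) * (2 * h)) := by
    have : ((v⁻¹ : Rˣ) : R) * (2 * h) = 2 * (((v⁻¹ : Rˣ) : R) * h) := by
      rw [← mul_assoc, ← (commute_two _).eq, mul_assoc]
    rw [this]
    exact nilpotent_two_mul hUU _
  have hu2 : IsUnit (1 - ((v⁻¹ : Rˣ) : R) * (2 * h)) := hn.isUnit_one_sub
  have key : (1 - m) * (1 - ((v⁻¹ : Rˣ) : R) * (2 * h)) = (1 - m) - 2 * h := by
    rw [mul_sub, mul_one, ← hv, ← mul_assoc, v.mul_inv, one_mul]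
  have : IsUnit ((1 - m) - 2 * h) := by
    rw [← key]; exact (hv ▸ v.isUnit).mul hu2
  have h3 : 2*h - 1 + m = -((1 - m) - 2 * h) := by noncomm_ring
  rw [h3]
  exact this.neg

/-- left exchange property -/
lemma left_exchange (hUU : UU R) (hGNC : IsGNC R) (a : R) :
    ∃ h c d : R, IsIdempotentElem h ∧ h = c * a ∧ d * (1 - a) = 1 - h := by
  obtain ⟨f, u, hf, hu, rfl⟩ := clean hUU hGNC a
  obtain ⟨v, hv⟩ := hu
  have hff : f * f = f := hf
  refine ⟨((v⁻¹ : Rˣ) : R) * ((1 - f) * (v : R)), ((v⁻¹ : Rˣ) : R) * (1 - f),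
    -(((v⁻¹ : Rˣ) : R) * f), ?_, ?_, ?_⟩
  · show _ * _ = _
    have h1 : (1 - f) * (1 - f) = 1 - f := hf.one_sub
    calc ((v⁻¹ : Rˣ) : R) * ((1 - f) * (v : R)) * (((v⁻¹ : Rˣ) : R) * ((1 - f) * (v : R)))
        = ((v⁻¹ : Rˣ) : R) * ((1 - f) * ((v : R) * (((v⁻¹ : Rˣ) : R) * ((1 - f) * (v : R))))) := by
          simp only [mul_assoc]
      _ = ((v⁻¹ : Rˣ) : R) * ((1 - f) * ((1 - f) * (v : R))) := by rw [v.mul_inv_cancel_left]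
      _ = ((v⁻¹ : Rˣ) : R) * ((1 - f) * (v : R)) := by rw [← mul_assoc (1-f), h1]
  · rw [← hv]
    have : (1 - f) * (f + (v:R)) = (1 - f) * (v : R) := by
      rw [mul_add, sub_mul, one_mul, hff, sub_self, zero_add]
    rw [mul_assoc, this]
  · rw [← hv]
    have h2 : f * (1 - (f + (v:R))) = -(f * (v:R)) := by
      rw [mul_sub, mul_one, mul_add, hff]; abel
    have h3 : -(((v⁻¹ : Rˣ) : R) * f) * (1 - (f + (v:R)))
        = ((v⁻¹ : Rˣ) : R) * (f * (v:R)) := by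
      rw [neg_mul, mul_assoc, h2, mul_neg, neg_neg]
    rw [h3]
    have h4 : (1:R) = ((v⁻¹ : Rˣ) : R) * (v : R) := v.inv_mul.symm
    calc ((v⁻¹ : Rˣ) : R) * (f * (v:R))
        = ((v⁻¹ : Rˣ) : R) * ((1 - (1 - f)) * (v:R)) := by rw [sub_sub_cancel]
      _ = ((v⁻¹ : Rˣ) : R) * ((v:R) - (1 - f) * (v:R)) := by rw [sub_mul, one_mul]
      _ = ((v⁻¹ : Rˣ) : R) * (v:R) - ((v⁻¹ : Rˣ) : R) * ((1 - f) * (v:R)) := by rw [mul_sub]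
      _ = 1 - ((v⁻¹ : Rˣ) : R) * ((1 - f) * (v:R)) := by rw [v.inv_mul]





/-- Key lemma: square-zero elements are quasi-regular. -/
lemma qr_of_sq_eq_zero (hUU : UU R) (hGNC : IsGNC R) (p : R) (hp : p * p = 0) : QR R p := by
  by_contra hno
  rw [QR] at hno
  push_neg at hno
  obtain ⟨r₁, hr₁⟩ := hno
  have hnl : ∃ r₀ : R, ¬∃ c : R, c * (1 + r₀ * p) = 1 := by
    by_contra hall
    push_neg at hall
    apply hr₁
    obtain ⟨c, hc⟩ := hall r₁
    have hc' : c = 1 + (-(c * r₁)) * p := by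
      rw [mul_add, mul_one, ← mul_assoc] at hc
      rw [neg_mul, ← hc]; abel
    obtain ⟨c₂, hc₂⟩ := hall (-(c * r₁))
    rw [← hc'] at hc₂
    have hl : (1 + r₁ * p) * c = 1 := by
      have h1 : c₂ = 1 + r₁ * p := by
        calc c₂ = c₂ * (c * (1 + r₁ * p)) := by rw [hc, mul_one]
          _ = (c₂ * c) * (1 + r₁ * p) := by rw [mul_assoc]
          _ = 1 + r₁ * p := by rw [hc₂, one_mul]
      rw [← h1]; exact hc₂
    exact isUnit_iff_exists.mpr ⟨c, hl, hc⟩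
  obtain ⟨r₀, hr₀⟩ := hnl
  obtain ⟨h, c₀, d, hh, hca, hd⟩ := left_exchange hUU hGNC (-(r₀ * p))
  have hh' : h * h = h := hh
  have hne : h ≠ 0 := by
    rintro rfl
    refine hr₀ ⟨d, ?_⟩
    have := hd
    rw [sub_neg_eq_add, sub_zero] at this
    exact this
  -- normalize the coefficient
  obtain ⟨c, hcdef⟩ : ∃ c : R, c = h * -(c₀ * r₀) := ⟨_, rfl⟩
  have hcp : h = c * p := by
    have e0 : h * h = h * (c₀ * -(r₀ * p)) := by rw [← hca]
    rw [hh'] at e0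
    have e1 : h * (c₀ * -(r₀ * p)) = (h * -(c₀ * r₀)) * p := by noncomm_ring
    rw [hcdef, ← e1, ← e0]
  have hch : h * c = c := by rw [hcdef, ← mul_assoc, hh']
  have hhp : h * p = 0 := by rw [hcp, mul_assoc, hp, mul_zero]
  by_cases hw0 : p * h = 0
  · -- Case A
    have hf2 : (p * c) * (p * c) = 0 := by
      have e1 : (p * c) * (p * c) = (p * (c * p)) * c := by noncomm_ring
      rw [e1, ← hcp, hw0, zero_mul]
    have hcf : c = c * (p * c) := by
      calc c = h * c := hch.symm
        _ = (c * p) * c := by rw [← hcp]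
        _ = c * (p * c) := by rw [mul_assoc]
    have hc0 : c = 0 := by
      calc c = c * (p * c) := hcf
        _ = (c * (p * c)) * (p * c) := congrArg (· * (p * c)) hcf
        _ = c * ((p * c) * (p * c)) := by rw [mul_assoc]
        _ = 0 := by rw [hf2, mul_zero]
    exact hne (by rw [hcp, hc0, zero_mul])
  · -- Case B
    obtain ⟨w, hwdef⟩ : ∃ w : R, w = p * h := ⟨_, rfl⟩
    rw [← hwdef] at hw0
    have hwh : w * h = w := by rw [hwdef, mul_assoc, hh']
    have hhw : h * w = 0 := by rw [hwdef, ← mul_assoc, hhp, zero_mul]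
    have hww : w * w = 0 := by
      rw [hwdef]
      have e1 : (p * h) * (p * h) = p * ((h * p) * h) := by noncomm_ring
      rw [e1, hhp, zero_mul, mul_zero]
    have hcw : c * w = h := by rw [hwdef, ← mul_assoc, ← hcp, hh']
    obtain ⟨σ, hσdef⟩ : ∃ σ : R, σ = w * c := ⟨_, rfl⟩
    have hσσ : σ * σ = σ := by
      calc σ * σ = w * ((c * w) * c) := by rw [hσdef]; noncomm_ring
        _ = w * (h * c) := by rw [hcw]
        _ = σ := by rw [hch, hσdef]
    have hσw : σ * w = w := by
      calc σ * w = w * (c * w) := by rw [hσdef, mul_assoc]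
        _ = w * h := by rw [hcw]
        _ = w := hwh
    have hwσ : w * σ = 0 := by rw [hσdef, ← mul_assoc, hww, zero_mul]
    have hhσ : h * σ = 0 := by rw [hσdef, ← mul_assoc, hhw, zero_mul]
    have hcσ : c * σ = c := by rw [hσdef, ← mul_assoc, hcw, hch]
    obtain ⟨σ₁, hσ₁def⟩ : ∃ σ₁ : R, σ₁ = σ - σ * h := ⟨_, rfl⟩
    have hσ₁h : σ₁ * h = 0 := by
      rw [hσ₁def, sub_mul, mul_assoc, hh', sub_self]
    have hhσ₁ : h * σ₁ = 0 := by
      rw [hσ₁def, mul_sub, ← mul_assoc, hhσ]; simp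
    have hσ₁σ₁ : σ₁ * σ₁ = σ₁ := by
      rw [hσ₁def]
      have e1 : (σ - σ * h) * (σ - σ * h)
          = σ * σ - (σ * σ) * h - σ * (h * σ) + σ * ((h * σ) * h) := by noncomm_ring
      rw [e1, hσσ, hhσ, mul_zero, zero_mul, mul_zero, sub_zero, add_zero]
    have hσ₁w : σ₁ * w = w := by
      rw [hσ₁def, sub_mul, mul_assoc, hhw, mul_zero, sub_zero, hσw]
    have hwσ₁ : w * σ₁ = 0 := by
      rw [hσ₁def, mul_sub, ← mul_assoc, hwσ]; simp
    have hσ₁ne : σ₁ ≠ 0 := by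
      intro h0
      apply hw0
      calc w = σ₁ * w := hσ₁w.symm
        _ = 0 := by rw [h0, zero_mul]
    obtain ⟨t, htdef⟩ : ∃ t : R, t = c - c * h := ⟨_, rfl⟩
    have htw : t * w = h := by
      rw [htdef, sub_mul, hcw, mul_assoc, hhw, mul_zero, sub_zero]
    have hwt : w * t = σ₁ := by
      rw [htdef, mul_sub, ← mul_assoc, ← hσdef, hσ₁def]
    have hht : h * t = t := by
      rw [htdef, mul_sub, hch, ← mul_assoc, hch]
    have hth : t * h = 0 := by
      rw [htdef, sub_mul, mul_assoc, hh', sub_self]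
    have htσ₁ : t * σ₁ = t := by
      have e1 : t * σ = c := by
        rw [htdef, sub_mul, hcσ, mul_assoc, hhσ, mul_zero, sub_zero]
      rw [hσ₁def, mul_sub, e1, ← mul_assoc, e1, htdef]
    have hσ₁t : σ₁ * t = 0 := by
      rw [← hht, ← mul_assoc, hσ₁h, zero_mul]
    have htt : t * t = 0 := by
      calc t * t = (t * h) * t := by rw [mul_assoc, hht]
        _ = 0 := by rw [hth, zero_mul]
    -- the unit (1+w)(1+t)
    have huw : IsUnit (1 + w) := by
      refine isUnit_iff_exists.mpr ⟨1 - w, ?_, ?_⟩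
      · have e1 : (1 + w) * (1 - w) = 1 - w * w := by noncomm_ring
        rw [e1, hww, sub_zero]
      · have e1 : (1 - w) * (1 + w) = 1 - w * w := by noncomm_ring
        rw [e1, hww, sub_zero]
    have hut : IsUnit (1 + t) := by
      refine isUnit_iff_exists.mpr ⟨1 - t, ?_, ?_⟩
      · have e1 : (1 + t) * (1 - t) = 1 - t * t := by noncomm_ring
        rw [e1, htt, sub_zero]
      · have e1 : (1 - t) * (1 + t) = 1 - t * t := by noncomm_ring
        rw [e1, htt, sub_zero]
    obtain ⟨qh, hqhnil, hqh⟩ := hUU _ (huw.mul hut)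
    obtain ⟨n, hndef⟩ : ∃ n : R, n = w + t + σ₁ := ⟨_, rfl⟩
    have hn_eq : (1 + w) * (1 + t) = 1 + n := by
      have e1 : (1 + w) * (1 + t) = 1 + (w + t + w * t) := by noncomm_ring
      rw [e1, hwt, hndef]
    have hqn : qh = n := add_left_cancel (hqh.symm.trans hn_eq)
    rw [hqn] at hqhnil
    -- products with n
    have hσ₁n : σ₁ * n = w + σ₁ := by
      rw [hndef, mul_add, mul_add, hσ₁w, hσ₁t, hσ₁σ₁, add_zero]
    have hwn : w * n = σ₁ := by
      rw [hndef, mul_add, mul_add, hww, hwt, hwσ₁, zero_add, add_zero]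
    have htn : t * n = h + t := by
      rw [hndef, mul_add, mul_add, htw, htt, htσ₁, add_zero]
    have hhn : h * n = t := by
      rw [hndef, mul_add, mul_add, hhw, hht, hhσ₁, zero_add, add_zero]
    -- power formula
    have hpow : ∀ k : ℕ, n^(k+1)
        = Nat.fib (k+2) • σ₁ + Nat.fib (k+1) • w + Nat.fib (k+1) • t + Nat.fib k • h := by
      intro k
      induction k with
      | zero =>
        rw [pow_one]
        simp only [Nat.fib_two, Nat.fib_one, Nat.fib_zero, one_smul, zero_smul, add_zero]
        rw [hndef]; abel
      | succ k ih =>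
        rw [pow_succ, ih]
        rw [add_mul, add_mul, add_mul, smul_mul_assoc, smul_mul_assoc, smul_mul_assoc,
            smul_mul_assoc, hσ₁n, hwn, htn, hhn]
        have f3 : Nat.fib (k+1+2) = Nat.fib (k+1) + Nat.fib (k+2) := Nat.fib_add_two
        have f2 : Nat.fib (k+2) = Nat.fib k + Nat.fib (k+1) := Nat.fib_add_two
        rw [f3, f2]
        simp only [add_smul, smul_add]
        abel
    -- kill σ₁
    obtain ⟨M, hM⟩ := hqhnil
    rcases M with _ | K
    · rw [pow_zero] at hM
      refine hσ₁ne ?_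
      calc σ₁ = σ₁ * 1 := (mul_one σ₁).symm
        _ = 0 := by rw [hM, mul_zero]
    · have hform := hpow K
      rw [hM] at hform
      have hBs : Nat.fib (K+1) • w = 0 := by
        have e : σ₁ * (Nat.fib (K+2) • σ₁ + Nat.fib (K+1) • w + Nat.fib (K+1) • t
            + Nat.fib K • h) * h = Nat.fib (K+1) • w := by
          simp only [mul_add, add_mul, mul_smul_comm, smul_mul_assoc]
          rw [hσ₁σ₁, hσ₁h, hσ₁w, hwh, hσ₁t]
          simp
        calc Nat.fib (K+1) • w
            = σ₁ * (Nat.fib (K+2) • σ₁ + Nat.fib (K+1) • w + Nat.fib (K+1) • t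
              + Nat.fib K • h) * h := e.symm
          _ = σ₁ * 0 * h := by rw [hform]
          _ = 0 := by rw [mul_zero, zero_mul]
      have hBσ₁ : Nat.fib (K+1) • σ₁ = 0 := by
        rw [← hwt, ← smul_mul_assoc, hBs, zero_mul]
      have hAσ₁ : Nat.fib (K+2) • σ₁ = 0 := by
        have e : σ₁ * (Nat.fib (K+2) • σ₁ + Nat.fib (K+1) • w + Nat.fib (K+1) • t
            + Nat.fib K • h) * σ₁ = Nat.fib (K+2) • σ₁ := by
          simp only [mul_add, add_mul, mul_smul_comm, smul_mul_assoc]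
          rw [hσ₁σ₁, hσ₁σ₁, hσ₁w, hwσ₁, hσ₁t, hσ₁h]
          simp
        calc Nat.fib (K+2) • σ₁
            = σ₁ * (Nat.fib (K+2) • σ₁ + Nat.fib (K+1) • w + Nat.fib (K+1) • t
              + Nat.fib K • h) * σ₁ := e.symm
          _ = σ₁ * 0 * σ₁ := by rw [hform]
          _ = 0 := by rw [mul_zero, zero_mul]
      have hcop : Nat.Coprime (Nat.fib (K+1)) (Nat.fib (K+2)) := Nat.fib_coprime_fib_succ (K+1)
      have hbez := Nat.gcd_eq_gcd_ab (Nat.fib (K+1)) (Nat.fib (K+2))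
      rw [Nat.Coprime] at hcop
      rw [hcop] at hbez
      refine hσ₁ne ?_
      have h1 : ((1:ℕ):ℤ) • σ₁ = σ₁ := by norm_num
      rw [← h1, hbez]
      rw [add_smul, mul_comm ((Nat.fib (K+1) : ℤ)) _, mul_comm ((Nat.fib (K+2) : ℤ)) _,
          mul_smul, mul_smul, natCast_zsmul, natCast_zsmul, hBσ₁, hAσ₁, smul_zero, smul_zero,
          add_zero]





/-- The two-sided ideal of quasi-regular elements. -/
def QI (R : Type*) [Ring R] : TwoSidedIdeal R :=
  TwoSidedIdeal.mk' {x | QR R x} QR.zero QR.add QR.neg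
    (fun {s x} hx => QR.mul_left s hx) (fun {x s} hx => QR.mul_right s hx)

lemma mem_QI {x : R} : x ∈ QI R ↔ QR R x := TwoSidedIdeal.mem_mk' _ _ _ _ _ _ x

/-- quotient map -/
noncomputable abbrev Qmap (R : Type*) [Ring R] : R →+* (QI R).ringCon.Quotient :=
  (QI R).ringCon.mk'

lemma Qmap_surjective : Function.Surjective (Qmap R) := fun b =>
  Quot.inductionOn b fun y => ⟨y, rfl⟩

lemma Qmap_eq_zero_iff {x : R} : Qmap R x = 0 ↔ QR R x := by
  have h0 : (0 : (QI R).ringCon.Quotient) = Qmap R 0 := rfl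
  rw [h0]
  show ((x : (QI R).ringCon.Quotient) = (0:R)) ↔ _
  rw [RingCon.eq, TwoSidedIdeal.rel_iff, sub_zero, mem_QI]

lemma isUnit_of_Qmap {x : R} (h : IsUnit (Qmap R x)) : IsUnit x := by
  obtain ⟨b, hb1, hb2⟩ := isUnit_iff_exists.mp h
  obtain ⟨y, rfl⟩ := Qmap_surjective b
  have hxy : QR R (x * y - 1) := by
    rw [← mem_QI, ← TwoSidedIdeal.rel_iff, ← RingCon.eq (c := (QI R).ringCon)]
    show Qmap R (x * y) = Qmap R 1
    rw [map_mul, map_one, hb1]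
  have hyx : QR R (y * x - 1) := by
    rw [← mem_QI, ← TwoSidedIdeal.rel_iff, ← RingCon.eq (c := (QI R).ringCon)]
    show Qmap R (y * x) = Qmap R 1
    rw [map_mul, map_one, hb2]
  have h1 : IsUnit (x * y) := by
    have := hxy 1
    rw [one_mul] at this
    simpa using this
  have h2 : IsUnit (y * x) := by
    have := hyx 1
    rw [one_mul] at this
    simpa using this
  obtain ⟨u, hu⟩ := h1
  obtain ⟨v, hv⟩ := h2
  have hr : x * (y * ((u⁻¹ : Rˣ) : R)) = 1 := by
    rw [← mul_assoc, ← hu, u.mul_inv]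
  have hl : (((v⁻¹ : Rˣ) : R) * y) * x = 1 := by
    rw [mul_assoc, ← hv, v.inv_mul]
  have heq : ((v⁻¹ : Rˣ) : R) * y = y * ((u⁻¹ : Rˣ) : R) := by
    calc ((v⁻¹ : Rˣ) : R) * y
        = (((v⁻¹ : Rˣ) : R) * y) * (x * (y * ((u⁻¹ : Rˣ) : R))) := by rw [hr, mul_one]
      _ = ((((v⁻¹ : Rˣ) : R) * y) * x) * (y * ((u⁻¹ : Rˣ) : R)) := by
          simp only [mul_assoc]
      _ = y * ((u⁻¹ : Rˣ) : R) := by rw [hl, one_mul]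
  refine isUnit_iff_exists.mpr ⟨y * ((u⁻¹ : Rˣ) : R), hr, ?_⟩
  rw [← heq]
  exact hl

/-- the quotient is UU -/
lemma UU_quotient (hUU : UU R) : UU ((QI R).ringCon.Quotient) := by
  intro ub hub
  obtain ⟨u, rfl⟩ := Qmap_surjective (R := R) ub
  obtain ⟨q, hq, hq2⟩ := hUU u (isUnit_of_Qmap hub)
  obtain ⟨k, hk⟩ := hq
  refine ⟨Qmap R q, ⟨k, ?_⟩, ?_⟩
  · rw [← map_pow, hk, map_zero]
  · rw [hq2, map_add, map_one]

/-- the quotient is GNC -/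
lemma GNC_quotient (hGNC : IsGNC R) : IsGNC ((QI R).ringCon.Quotient) := by
  intro ab hab
  obtain ⟨a, rfl⟩ := Qmap_surjective (R := R) ab
  have ha : ¬ IsUnit a := fun h => hab (h.map (Qmap R))
  obtain ⟨e, q, he, hq, rfl⟩ := hGNC a ha
  obtain ⟨k, hk⟩ := hq
  refine ⟨Qmap R e, Qmap R q, ?_, ⟨k, ?_⟩, ?_⟩
  · show Qmap R e * Qmap R e = Qmap R e
    rw [← map_mul, he]
  · rw [← map_pow, hk, map_zero]
  · rw [map_add]

/-- the quotient has trivial QR -/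
lemma QR_quotient_trivial (x : (QI R).ringCon.Quotient)
    (h : QR ((QI R).ringCon.Quotient) x) : x = 0 := by
  obtain ⟨a, rfl⟩ := Qmap_surjective (R := R) x
  rw [Qmap_eq_zero_iff]
  intro r
  have := h (Qmap R r)
  have h2 : (1 : (QI R).ringCon.Quotient) + Qmap R r * Qmap R a = Qmap R (1 + r * a) := by
    rw [map_add, map_one, map_mul]
  rw [h2] at this
  exact isUnit_of_Qmap this

/-- the quotient is reduced -/
lemma reduced_quotient (hUU : UU R) (hGNC : IsGNC R) :
    ∀ (n : ℕ) (x : (QI R).ringCon.Quotient), x ^ n = 0 → x = 0 := by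
  intro n
  induction n using Nat.strong_induction_on with
  | _ n ih =>
    intro x hx
    match n, hx with
    | 0, hx => 
      have h1 : (1 : (QI R).ringCon.Quotient) = 0 := by rw [← pow_zero x, hx]
      calc x = x * 1 := (mul_one x).symm
        _ = 0 := by rw [h1, mul_zero]
    | 1, hx => rw [pow_one] at hx; exact hx
    | (m+2), hx =>
      have hsq : (x^(m+1)) * (x^(m+1)) = 0 := by
        rw [← pow_add]
        have : m + 1 + (m + 1) = (m + 2) + m := by omega
        rw [this, pow_add, hx, zero_mul]
      have hqr : QR _ (x^(m+1)) :=
        qr_of_sq_eq_zero (UU_quotient hUU) (GNC_quotient hGNC) _ hsq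
      have hx1 : x^(m+1) = 0 := QR_quotient_trivial _ hqr
      exact ih (m+1) (by omega) x hx1

/-- main: a - a² is nilpotent for every a -/
lemma sub_sq_nilpotent (hUU : UU R) (hGNC : IsGNC R) (a : R) : IsNilpotent (a - a^2) := by
  have hbool : Qmap R (a * a - a) = 0 := by
    have : Qmap R (a * a - a) = Qmap R a * Qmap R a - Qmap R a := by
      rw [map_sub, map_mul]
    rw [this]
    by_cases hu : IsUnit (Qmap R a)
    · obtain ⟨qb, hqb, hqb2⟩ := UU_quotient hUU _ hu
      have hq0 : qb = 0 := by
        obtain ⟨k, hk⟩ := hqb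
        exact reduced_quotient hUU hGNC k qb hk
      rw [hqb2, hq0, add_zero, mul_one, sub_self]
    · obtain ⟨eb, qb, heb, hqb, hab⟩ := GNC_quotient hGNC _ hu
      have hq0 : qb = 0 := by
        obtain ⟨k, hk⟩ := hqb
        exact reduced_quotient hUU hGNC k qb hk
      rw [hq0, add_zero] at hab
      rw [hab, heb, sub_self]
  rw [Qmap_eq_zero_iff] at hbool
  have hun : IsUnit (1 + (a * a - a)) := by
    have := hbool 1
    rwa [one_mul] at this
  obtain ⟨q, hq, hq2⟩ := hUU _ hun
  have : a * a - a = q := (add_left_cancel hq2.symm).symm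
  have h2 : a - a^2 = -q := by rw [← this, pow_two]; abel
  rw [h2]
  exact hq.neg

/-- the backward direction -/
lemma backward (hUU : UU R) (hGNC : IsGNC R) (a : R) :
    ∃ e q : R, IsIdempotentElem e ∧ IsNilpotent q ∧ Commute e q ∧ a = e + q :=
  newton a (sub_sq_nilpotent hUU hGNC a)


/-- the forward direction -/
lemma forward
    (hSNC : ∀ a : R, ∃ e q : R, IsIdempotentElem e ∧ IsNilpotent q ∧ Commute e q ∧ a = e + q) :
    UU R ∧ IsGNC R := by
  constructor
  · intro u hu
    obtain ⟨e, q, he, hq, hcomm, heq⟩ := hSNC u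
    obtain ⟨v, hv⟩ := hu
    have hvq : Commute ((v : R)) q := by
      rw [hv, heq]
      exact Commute.add_left hcomm (Commute.refl q)
    have hinv : Commute (((v⁻¹ : Rˣ) : R)) q := hvq.units_inv_left
    have hn : IsNilpotent (((v⁻¹ : Rˣ) : R) * q) := hinv.isNilpotent_mul_left hq
    have he_eq : (v : R) * (1 - ((v⁻¹ : Rˣ) : R) * q) = e := by
      rw [mul_sub, mul_one, ← mul_assoc, v.mul_inv, one_mul, hv, heq]
      abel
    have heu : IsUnit e := by
      rw [← he_eq]
      exact v.isUnit.mul hn.isUnit_one_sub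
    have he1 : e = 1 := by
      obtain ⟨w, hw⟩ := heu
      calc e = (((w⁻¹ : Rˣ) : R) * (w : R)) * e := by rw [w.inv_mul, one_mul]
        _ = ((w⁻¹ : Rˣ) : R) * (e * e) := by rw [mul_assoc, hw]
        _ = ((w⁻¹ : Rˣ) : R) * e := by rw [he]
        _ = ((w⁻¹ : Rˣ) : R) * (w : R) := by rw [hw]
        _ = 1 := w.inv_mul
    exact ⟨q, hq, by rw [heq, he1]⟩
  · intro a _
    obtain ⟨e, q, he, hq, _, heq⟩ := hSNC a
    exact ⟨e, q, he, hq, heq⟩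

end SNCProof

theorem stronglyNilClean_iff_uu_and_gnc {R : Type*} [Ring R] :
    (∀ a : R, ∃ e q : R, IsIdempotentElem e ∧ IsNilpotent q ∧ Commute e q ∧ a = e + q) ↔
      ((∀ u : R, IsUnit u → ∃ q : R, IsNilpotent q ∧ u = 1 + q) ∧ IsGNC R) := by
  constructor
  · intro h
    exact SNCProof.forward h
  · rintro ⟨hUU, hGNC⟩ a
    exact SNCProof.backward hUU hGNC a
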